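/- Let k ≥ 2, and let 𝒢 = {{k+2, k+3, …, 2k}} be the single-gee collection arising from the equilateral (2k+1)-gon, with n = 2k+1 and m = 2k−2. Then every algebra R of type (𝒢, m, n) satisfies zcl(R) = 2k. -/

import Mathlib

open scoped TensorProduct

/-- `[k] = {1,…,k}` as a finset of positive integers. -/
def bra (k : ℕ) : Finset ℕ+ := (Finset.range k).image (fun i => ⟨i + 1, i.succ_pos⟩)

/-- The domination order on finite multisets of positive integers: `MLE S T` holds iff there
is a submultiset `T'` of `T` that can be matched up with `S` so that each element of `S` is
at most its partner in `T'`. -/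
def MLE (S T : Multiset ℕ+) : Prop := ∃ T' ≤ T, Multiset.Rel (· ≤ ·) S T'

/-- `S` is a subgee of the collection `𝒢` of gees. -/
def Subgee (𝒢 : Finset (Finset ℕ+)) (S : Finset ℕ+) : Prop := ∃ G ∈ 𝒢, MLE S.val G.val

/-- `rho i T` is the number of elements of `T` greater than `i`. -/
def rho (i : ℕ+) (T : Finset ℕ+) : ℕ := (T.filter (fun t => i < t)).card

/-- The ordered monomial `V_S = V_{s₁} ⋯ V_{s_k}` for `S = {s₁ < ⋯ < s_k}`. -/
def VSmon {R : Type} [Ring R] (V : ℕ+ → R) (S : Finset ℕ+) : R :=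
  ((S.sort (· ≤ ·)).map V).prod

/-- An algebra of type `(𝒢, m, n)`. -/
structure IsPolygonAlgebra (n m : ℕ) (𝒢 : Finset (Finset ℕ+))
    (R : Type) [Ring R] [Algebra ℚ R] [FiniteDimensional ℚ R]
    (𝒜 : ℕ → Submodule ℚ R) [GradedAlgebra 𝒜]
    (V : ℕ+ → R) (W : Finset ℕ+ → R) : Prop where
  hn : 4 ≤ n
  hm : 1 ≤ m
  gee_nonempty : 𝒢.Nonempty
  gee_sub : ∀ G ∈ 𝒢, G ⊆ bra (n - 1)
  gee_incomp : ∀ G ∈ 𝒢, ∀ G' ∈ 𝒢, MLE G.val G'.val → G = G'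
  gee_card : ∀ G ∈ 𝒢, G.card ≤ m - 1
  gcomm : ∀ (i j : ℕ) (x y : R), x ∈ 𝒜 i → y ∈ 𝒜 j →
    x * y = ((-1 : ℚ)) ^ (i * j) • (y * x)
  V_mem : ∀ i : ℕ+, (i : ℕ) ≤ n - 1 → V i ∈ 𝒜 1
  W_mem : ∀ S : Finset ℕ+, Subgee 𝒢 S → W S ∈ 𝒜 (m - S.card)
  VS_ne : ∀ S : Finset ℕ+, S ⊆ bra (n - 1) → (VSmon V S ≠ 0 ↔ Subgee 𝒢 S)
  basis_indep : LinearIndependent ℚ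
    (Sum.elim (fun S : {S : Finset ℕ+ // Subgee 𝒢 S} => VSmon V S.1)
      (fun S : {S : Finset ℕ+ // Subgee 𝒢 S} => W S.1))
  basis_span : Submodule.span ℚ (Set.range
    (Sum.elim (fun S : {S : Finset ℕ+ // Subgee 𝒢 S} => VSmon V S.1)
      (fun S : {S : Finset ℕ+ // Subgee 𝒢 S} => W S.1))) = ⊤
  VW : ∀ S S' : Finset ℕ+, Subgee 𝒢 S → Subgee 𝒢 S' → S.card = S'.card →
    VSmon V S * W S' = if S = S' then W ∅ else 0
  WW : ∀ S S' : Finset ℕ+, Subgee 𝒢 S → Subgee 𝒢 S' → S.card + S'.card = m →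
    W S * W S' = 0

/-- `R` has no exotic products. -/
def NoExoticProducts (n : ℕ) (𝒢 : Finset (Finset ℕ+))
    {R : Type} [Ring R] [Algebra ℚ R] (V : ℕ+ → R) (W : Finset ℕ+ → R) : Prop :=
  (∀ S S' : Finset ℕ+, Subgee 𝒢 S → Subgee 𝒢 S' → W S * W S' = 0) ∧
  (∀ i : ℕ+, (i : ℕ) ≤ n - 1 → ∀ S : Finset ℕ+, Subgee 𝒢 S →
    (i ∈ S → V i * W S = ((-1 : ℚ)) ^ (rho i (S.erase i)) • W (S.erase i)) ∧
    (i ∉ S → V i * W S = 0))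

section Tensor

variable {R : Type} [Ring R] [Algebra ℚ R] (𝒜 : ℕ → Submodule ℚ R) [GradedAlgebra 𝒜]

/-- The multiplication map `μ : R ⊗̂ R → R`. -/
noncomputable def muMap : (𝒜 ᵍ⊗[ℚ] 𝒜) →ₗ[ℚ] R :=
  (LinearMap.mul' ℚ R).comp (GradedTensorProduct.of ℚ 𝒜 𝒜).symm.toLinearMap

/-- `x ⊗ y` as an element of the graded tensor product `R ⊗̂ R`. -/
noncomputable def tm (x y : R) : 𝒜 ᵍ⊗[ℚ] 𝒜 := GradedTensorProduct.of ℚ 𝒜 𝒜 (x ⊗ₜ y)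

/-- `ū = u ⊗ 1 - 1 ⊗ u`. -/
noncomputable def ubar (u : R) : 𝒜 ᵍ⊗[ℚ] 𝒜 := tm 𝒜 u 1 - tm 𝒜 1 u

/-- `V̄_D = ∏_{i ∈ D} V̄ᵢ` with factors in increasing order of `i`. -/
noncomputable def Vbar (V : ℕ+ → R) (D : Finset ℕ+) : 𝒜 ᵍ⊗[ℚ] 𝒜 :=
  ((D.sort (· ≤ ·)).map (fun i => ubar 𝒜 (V i))).prod

/-- The set of `k` such that some product of `k` zero divisors in `R ⊗̂ R` is nonzero;
`zcl R` is the greatest element of this set. -/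
def zclSet : Set ℕ :=
  {k : ℕ | ∃ L : List (𝒜 ᵍ⊗[ℚ] 𝒜), L.length = k ∧
    (∀ x ∈ L, muMap 𝒜 x = 0) ∧ L.prod ≠ 0}

end Tensor

namespace PolyAux

lemma mem_bra {a : ℕ+} {t : ℕ} : a ∈ bra t ↔ (a : ℕ) ≤ t := by
  show a ∈ (Finset.range t).image Nat.succPNat ↔ _
  simp only [Finset.mem_image, Finset.mem_range]
  constructor
  · rintro ⟨i, hi, rfl⟩; exact hi
  · intro hle
    have := a.pos
    refine ⟨(a : ℕ) - 1, by omega, ?_⟩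
    apply Subtype.ext; show (a : ℕ) - 1 + 1 = (a : ℕ); omega

lemma rel_refl (s : Multiset ℕ+) : Multiset.Rel (· ≤ ·) s s :=
  Multiset.rel_refl_of_refl_on fun _ _ => le_refl _

lemma rel_mem {s t : Multiset ℕ+} (h : Multiset.Rel (· ≤ ·) s t) {a : ℕ+} (ha : a ∈ s) :
    ∃ b ∈ t, a ≤ b := by
  induction h with
  | zero => simp at ha
  | cons hab hst ih =>
    rcases Multiset.mem_cons.1 ha with rfl | ha'
    · exact ⟨_, Multiset.mem_cons_self _ _, hab⟩
    · obtain ⟨b, hb, hab'⟩ := ih ha'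
      exact ⟨b, Multiset.mem_cons_of_mem hb, hab'⟩

lemma rel_erase {s t : Multiset ℕ+} (h : Multiset.Rel (· ≤ ·) s t) (a : ℕ+) :
    ∃ t' ≤ t, Multiset.Rel (· ≤ ·) (s.erase a) t' := by
  classical
  induction h with
  | zero => exact ⟨0, le_refl _, by simp [Multiset.Rel.zero]⟩
  | @cons x b as bs hab hst ih =>
    by_cases hax : a = x
    · subst hax
      exact ⟨bs, Multiset.le_cons_self _ _, by simpa using hst⟩
    · obtain ⟨t', ht', hrel⟩ := ih
      refine ⟨b ::ₘ t', Multiset.cons_le_cons _ ht', ?_⟩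
      rw [Multiset.erase_cons_tail]
      · exact Multiset.Rel.cons hab hrel
      · exact fun hc => hax (hc.symm)

lemma rel_of_card_of_le {s t : Multiset ℕ+} (hc : Multiset.card s = Multiset.card t)
    (hall : ∀ a ∈ s, ∀ b ∈ t, a ≤ b) : Multiset.Rel (· ≤ ·) s t := by
  induction s using Multiset.induction generalizing t with
  | empty =>
    have : t = 0 := by
      rw [← Multiset.card_eq_zero]; simpa using hc.symm
    simp [this, Multiset.Rel.zero]
  | @cons a s ih =>
    have ht : t ≠ 0 := by
      intro h0; rw [h0] at hc; simp at hc
    obtain ⟨b, hb⟩ := Multiset.exists_mem_of_ne_zero ht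
    obtain ⟨t', rfl⟩ := Multiset.exists_cons_of_mem hb
    refine Multiset.Rel.cons (hall a (Multiset.mem_cons_self _ _) b (Multiset.mem_cons_self _ _)) ?_
    refine ih ?_ ?_
    · simpa using hc
    · exact fun x hx y hy => hall x (Multiset.mem_cons_of_mem hx) y (Multiset.mem_cons_of_mem hy)

variable {𝒢 : Finset (Finset ℕ+)}

lemma subgee_erase {S : Finset ℕ+} (hS : Subgee 𝒢 S) (a : ℕ+) : Subgee 𝒢 (S.erase a) := by
  classical
  obtain ⟨G, hG, T', hT', hrel⟩ := hS
  obtain ⟨t', ht', hrel'⟩ := rel_erase hrel a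
  exact ⟨G, hG, t', le_trans ht' hT', by rwa [Finset.erase_val]⟩

lemma subgee_sdiff {S T : Finset ℕ+} (hT : Subgee 𝒢 T) : Subgee 𝒢 (T \ S) := by
  classical
  induction S using Finset.induction generalizing T with
  | empty => simpa using hT
  | @insert a s ha ih =>
    rw [Finset.sdiff_insert]
    exact subgee_erase (ih hT) a

lemma subgee_empty (hne : 𝒢.Nonempty) : Subgee 𝒢 ∅ := by
  obtain ⟨G, hG⟩ := hne
  exact ⟨G, hG, 0, by simp, by simp [Multiset.Rel.zero]⟩

lemma subgee_card {S : Finset ℕ+} (hS : Subgee 𝒢 S) : ∃ G ∈ 𝒢, S.card ≤ G.card := by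
  obtain ⟨G, hG, T', hT', hrel⟩ := hS
  refine ⟨G, hG, ?_⟩
  have h1 := Multiset.card_eq_card_of_rel hrel
  have h2 := Multiset.card_le_card hT'
  simp only [Finset.card] at *
  omega

lemma subgee_mem_le {S : Finset ℕ+} (hS : Subgee 𝒢 S) {a : ℕ+} (ha : a ∈ S)
    {t : ℕ} (hsub : ∀ G ∈ 𝒢, G ⊆ bra t) : (a : ℕ) ≤ t := by
  obtain ⟨G, hG, T', hT', hrel⟩ := hS
  obtain ⟨b, hb, hab⟩ := rel_mem hrel (by simpa using ha)
  have hbG : b ∈ G := Multiset.mem_of_le hT' hb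
  have := mem_bra.1 (hsub G hG hbG)
  exact le_trans ((PNat.coe_le_coe _ _).2 hab) this

end PolyAux
namespace PolyAux

section Alg

variable {R : Type} [Ring R] [Algebra ℚ R] [FiniteDimensional ℚ R]
variable {𝒜 : ℕ → Submodule ℚ R} [GradedAlgebra 𝒜] {V : ℕ+ → R} {W : Finset ℕ+ → R}
variable {nn m : ℕ} {𝒢 : Finset (Finset ℕ+)}

/-- index type for the basis -/
abbrev Idx (𝒢 : Finset (Finset ℕ+)) :=
  {S : Finset ℕ+ // Subgee 𝒢 S} ⊕ {S : Finset ℕ+ // Subgee 𝒢 S}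

variable (V W) in
def bfun : Idx 𝒢 → R :=
  Sum.elim (fun S : {S : Finset ℕ+ // Subgee 𝒢 S} => VSmon V S.1)
    (fun S : {S : Finset ℕ+ // Subgee 𝒢 S} => W S.1)

variable (𝒢) in
def degI (m : ℕ) : Idx 𝒢 → ℕ := Sum.elim (fun S => S.1.card) (fun S => m - S.1.card)

variable (h : IsPolygonAlgebra nn m 𝒢 R 𝒜 V W)

include h

lemma subgee_le {S : Finset ℕ+} (hS : Subgee 𝒢 S) {a : ℕ+} (ha : a ∈ S) : (a : ℕ) ≤ nn - 1 :=
  subgee_mem_le hS ha h.gee_sub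

lemma listprod_mem {l : List ℕ+} (hl : ∀ a ∈ l, (a : ℕ) ≤ nn - 1) :
    (l.map V).prod ∈ 𝒜 l.length := by
  induction l with
  | nil => exact SetLike.one_mem_graded _
  | cons a l ih =>
    rw [List.map_cons, List.prod_cons, List.length_cons]
    have : (1 : ℕ) + l.length = l.length + 1 := by omega
    rw [← this]
    exact SetLike.mul_mem_graded (h.V_mem a (hl a (List.mem_cons_self)))
      (ih fun x hx => hl x (List.mem_cons_of_mem _ hx))

lemma Vm_mem {S : Finset ℕ+} (hS : Subgee 𝒢 S) : VSmon V S ∈ 𝒜 S.card := by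
  have := listprod_mem h (l := S.sort (· ≤ ·))
    (fun a ha => subgee_le h hS (Finset.mem_sort _ |>.1 ha))
  rwa [Finset.length_sort] at this

lemma bfun_mem (i : Idx 𝒢) : bfun V W i ∈ 𝒜 (degI 𝒢 m i) := by
  cases i with
  | inl S => exact Vm_mem h S.2
  | inr S => exact h.W_mem S.1 S.2

omit h

/-- projection onto degree d -/
noncomputable def proj (𝒜 : ℕ → Submodule ℚ R) [GradedAlgebra 𝒜] (d : ℕ) : R →ₗ[ℚ] R :=
  (𝒜 d).subtype ∘ₗ (DirectSum.component ℚ ℕ (fun i => 𝒜 i) d) ∘ₗ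
    (DirectSum.decomposeAlgEquiv 𝒜).toLinearMap

lemma proj_same {d : ℕ} {x : R} (hx : x ∈ 𝒜 d) : proj 𝒜 d x = x := by
  have hrfl : proj 𝒜 d x = ((DirectSum.decompose 𝒜 x) d : R) := rfl
  rw [hrfl]
  exact DirectSum.decompose_of_mem_same 𝒜 hx

lemma proj_ne {d e : ℕ} (hne : e ≠ d) {x : R} (hx : x ∈ 𝒜 e) : proj 𝒜 d x = 0 := by
  have hrfl : proj 𝒜 d x = ((DirectSum.decompose 𝒜 x) d : R) := rfl
  rw [hrfl]
  exact DirectSum.decompose_of_mem_ne 𝒜 hx hne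

include h

lemma mem_span_deg {x : R} {d : ℕ} (hx : x ∈ 𝒜 d) :
    x ∈ Submodule.span ℚ (bfun V W '' {i : Idx 𝒢 | degI 𝒢 m i = d}) := by
  classical
  have htop : x ∈ Submodule.span ℚ (Set.range (bfun V W (𝒢 := 𝒢))) := by
    rw [show Set.range (bfun V W (𝒢 := 𝒢)) = Set.range
      (Sum.elim (fun S : {S : Finset ℕ+ // Subgee 𝒢 S} => VSmon V S.1)
        (fun S : {S : Finset ℕ+ // Subgee 𝒢 S} => W S.1)) from rfl, h.basis_span]
    trivial
  have hsplit : Set.range (bfun V W (𝒢 := 𝒢)) =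
      (bfun V W '' {i : Idx 𝒢 | degI 𝒢 m i = d}) ∪ (bfun V W '' {i | degI 𝒢 m i ≠ d}) := by
    have huniv : {i : Idx 𝒢 | degI 𝒢 m i = d} ∪ {i | degI 𝒢 m i ≠ d} = Set.univ := by
      ext i; by_cases hi : degI 𝒢 m i = d <;> simp [hi]
    rw [← Set.image_univ, ← huniv, Set.image_union]
  rw [hsplit, Submodule.span_union] at htop
  obtain ⟨y, hy, z, hz, hxyz⟩ := Submodule.mem_sup.1 htop
  have hyp : proj 𝒜 d y = y := by
    refine Submodule.span_induction (p := fun w _ => proj 𝒜 d w = w) ?_ (map_zero _) ?_ ?_ hy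
    · rintro w ⟨i, hi, rfl⟩
      exact proj_same (hi ▸ bfun_mem h i)
    · intro a b _ _ ha hb; rw [map_add, ha, hb]
    · intro c a _ ha; rw [map_smul, ha]
  have hzp : proj 𝒜 d z = 0 := by
    refine Submodule.span_induction (p := fun w _ => proj 𝒜 d w = 0) ?_ (map_zero _) ?_ ?_ hz
    · rintro w ⟨i, hi, rfl⟩
      exact proj_ne hi (bfun_mem h i)
    · intro a b _ _ ha hb; rw [map_add, ha, hb, add_zero]
    · intro c a _ ha; rw [map_smul, ha, smul_zero]
  have : proj 𝒜 d x = x := proj_same hx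
  rw [← hxyz, map_add, hyp, hzp, add_zero] at this
  rw [← hxyz, ← this]
  exact hy

end Alg

end PolyAux
namespace PolyAux
section Alg2

variable {R : Type} [Ring R] [Algebra ℚ R] [FiniteDimensional ℚ R]
variable {𝒜 : ℕ → Submodule ℚ R} [GradedAlgebra 𝒜] {V : ℕ+ → R} {W : Finset ℕ+ → R}
variable {nn m : ℕ} {𝒢 : Finset (Finset ℕ+)}
variable (h : IsPolygonAlgebra nn m 𝒢 R 𝒜 V W)

include h

lemma VV_anti {a b : ℕ+} (ha : (a : ℕ) ≤ nn - 1) (hb : (b : ℕ) ≤ nn - 1) :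
    V a * V b = -(V b * V a) := by
  have := h.gcomm 1 1 (V a) (V b) (h.V_mem a ha) (h.V_mem b hb)
  simpa [neg_one_smul] using this

lemma VV_self {a : ℕ+} (ha : (a : ℕ) ≤ nn - 1) : V a * V a = 0 := by
  have h1 := VV_anti h ha ha
  have h2 : (2 : ℚ) • (V a * V a) = 0 := by
    rw [two_smul]
    nth_rewrite 2 [h1]
    exact add_neg_cancel _
  rcases smul_eq_zero.1 h2 with h3 | h3
  · norm_num at h3
  · exact h3

lemma prod_perm {l₁ l₂ : List ℕ+} (hp : l₁.Perm l₂) (hall : ∀ a ∈ l₁, (a : ℕ) ≤ nn - 1) :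
    ∃ c : ℚ, (c = 1 ∨ c = -1) ∧ (l₁.map V).prod = c • (l₂.map V).prod := by
  induction hp with
  | nil => exact ⟨1, Or.inl rfl, by simp⟩
  | @cons a l₁' l₂' hp ih =>
    obtain ⟨c, hc, heq⟩ := ih (fun x hx => hall x (List.mem_cons_of_mem _ hx))
    refine ⟨c, hc, ?_⟩
    simp only [List.map_cons, List.prod_cons, heq, mul_smul_comm]
  | @swap a b l =>
    have hb' : (b : ℕ) ≤ nn - 1 := hall b List.mem_cons_self
    have ha' : (a : ℕ) ≤ nn - 1 := hall a (List.mem_cons_of_mem _ List.mem_cons_self)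
    refine ⟨-1, Or.inr rfl, ?_⟩
    simp only [List.map_cons, List.prod_cons, ← mul_assoc]
    rw [VV_anti h hb' ha']
    simp
  | @trans l₁' l₂' l₃' hp₁ hp₂ ih₁ ih₂ =>
    obtain ⟨c₁, hc₁, he₁⟩ := ih₁ hall
    obtain ⟨c₂, hc₂, he₂⟩ := ih₂ (fun x hx => hall x (hp₁.mem_iff.2 hx))
    refine ⟨c₁ * c₂, ?_, by rw [he₁, he₂, smul_smul]⟩
    rcases hc₁ with rfl | rfl <;> rcases hc₂ with rfl | rfl <;> norm_num

lemma prod_dup {l : List ℕ+} (hnd : ¬ l.Nodup) (hall : ∀ a ∈ l, (a : ℕ) ≤ nn - 1) :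
    (l.map V).prod = 0 := by
  classical
  rw [List.nodup_iff_count_le_one] at hnd
  push_neg at hnd
  obtain ⟨a, hcnt⟩ := hnd
  have ha1 : a ∈ l := by
    rw [← List.count_pos_iff]
    omega
  have ha2 : a ∈ l.erase a := by
    rw [← List.count_pos_iff]
    rw [List.count_erase_self]
    omega
  have hperm : l.Perm (a :: a :: (l.erase a).erase a) :=
    (List.perm_cons_erase ha1).trans ((List.perm_cons_erase ha2).cons a)
  obtain ⟨c, _, heq⟩ := prod_perm h hperm hall
  rw [heq]
  simp only [List.map_cons, List.prod_cons, ← mul_assoc]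
  rw [VV_self h (hall a ha1)]
  simp

lemma Vm_mul_V_notmem {S : Finset ℕ+} {a : ℕ+} (ha : a ∉ S)
    (hall : ∀ x ∈ insert a S, (x : ℕ) ≤ nn - 1) :
    ∃ c : ℚ, (c = 1 ∨ c = -1) ∧ VSmon V S * V a = c • VSmon V (insert a S) := by
  classical
  have hsplit : VSmon V S * V a = ((S.sort (· ≤ ·) ++ [a]).map V).prod := by
    rw [List.map_append, List.prod_append]
    simp [VSmon]
  have hperm : (S.sort (· ≤ ·) ++ [a]).Perm ((insert a S).sort (· ≤ ·)) := by
    refine ((Finset.sort_perm_toList _ _).append_right _).trans ?_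
    refine (List.perm_append_singleton _ _).trans ?_
    exact ((Finset.toList_insert ha).symm).trans (Finset.sort_perm_toList _ _).symm
  obtain ⟨c, hc, heq⟩ := prod_perm h hperm (by
    intro x hx
    rcases List.mem_append.1 hx with hx | hx
    · exact hall x (Finset.mem_insert_of_mem (Finset.mem_sort _ |>.1 hx))
    · simp only [List.mem_singleton] at hx
      exact hall x (hx ▸ Finset.mem_insert_self a S))
  exact ⟨c, hc, by rw [hsplit, heq]; rfl⟩

lemma Vm_mul_V_mem {S : Finset ℕ+} {a : ℕ+} (ha : a ∈ S)
    (hall : ∀ x ∈ S, (x : ℕ) ≤ nn - 1) :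
    VSmon V S * V a = 0 := by
  classical
  have hsplit : VSmon V S * V a = ((S.sort (· ≤ ·) ++ [a]).map V).prod := by
    rw [List.map_append, List.prod_append]
    simp [VSmon]
  rw [hsplit]
  refine prod_dup h ?_ ?_
  · intro hnd
    exact (List.nodup_append.1 hnd).2.2 a ((Finset.mem_sort _).2 ha) a (List.mem_singleton_self a) rfl
  · intro x hx
    rcases List.mem_append.1 hx with hx | hx
    · exact hall x (Finset.mem_sort _ |>.1 hx)
    · simp only [List.mem_singleton] at hx
      exact hall x (hx ▸ ha)

lemma Vm_mul_Vm_disj {S S' : Finset ℕ+} (hS : Subgee 𝒢 S) (hS' : Subgee 𝒢 S')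
    (hdisj : Disjoint S S') :
    ∃ c : ℚ, (c = 1 ∨ c = -1) ∧ VSmon V S * VSmon V S' = c • VSmon V (S ∪ S') := by
  classical
  have hsplit : VSmon V S * VSmon V S' = ((S.sort (· ≤ ·) ++ S'.sort (· ≤ ·)).map V).prod := by
    rw [List.map_append, List.prod_append]; rfl
  have hperm : (S.sort (· ≤ ·) ++ S'.sort (· ≤ ·)).Perm ((S ∪ S').sort (· ≤ ·)) := by
    rw [← Multiset.coe_eq_coe, ← Finset.disjUnion_eq_union _ _ hdisj]
    have hval : (S.disjUnion S' hdisj).val = S.1 + S'.1 := rfl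
    have hco : ((S.sort (· ≤ ·) ++ S'.sort (· ≤ ·) : List ℕ+) : Multiset ℕ+)
        = (S.sort (· ≤ ·) : Multiset ℕ+) + (S'.sort (· ≤ ·) : Multiset ℕ+) := rfl
    rw [Finset.sort_eq, hco, hval, Finset.sort_eq, Finset.sort_eq]
  obtain ⟨c, hc, heq⟩ := prod_perm h hperm (by
    intro x hx
    rcases List.mem_append.1 hx with hx | hx
    · exact subgee_le h hS (Finset.mem_sort _ |>.1 hx)
    · exact subgee_le h hS' (Finset.mem_sort _ |>.1 hx))
  exact ⟨c, hc, by rw [hsplit, heq]; rfl⟩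

lemma Vm_mul_Vm_ndisj {S S' : Finset ℕ+} (hS : Subgee 𝒢 S) (hS' : Subgee 𝒢 S')
    (hdisj : ¬ Disjoint S S') :
    VSmon V S * VSmon V S' = 0 := by
  classical
  obtain ⟨x, hxS, hxS'⟩ := Finset.not_disjoint_iff.1 hdisj
  have hsplit : VSmon V S * VSmon V S' = ((S.sort (· ≤ ·) ++ S'.sort (· ≤ ·)).map V).prod := by
    rw [List.map_append, List.prod_append]; rfl
  rw [hsplit]
  refine prod_dup h ?_ ?_
  · intro hnd
    exact (List.nodup_append.1 hnd).2.2 x ((Finset.mem_sort _).2 hxS) x ((Finset.mem_sort _).2 hxS') rfl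
  · intro x hx
    rcases List.mem_append.1 hx with hx | hx
    · exact subgee_le h hS (Finset.mem_sort _ |>.1 hx)
    · exact subgee_le h hS' (Finset.mem_sort _ |>.1 hx)

end Alg2
end PolyAux
namespace PolyAux
section Alg3

variable {R : Type} [Ring R] [Algebra ℚ R] [FiniteDimensional ℚ R]
variable {𝒜 : ℕ → Submodule ℚ R} [GradedAlgebra 𝒜] {V : ℕ+ → R} {W : Finset ℕ+ → R}
variable {nn m : ℕ} {𝒢 : Finset (Finset ℕ+)}
variable (h : IsPolygonAlgebra nn m 𝒢 R 𝒜 V W)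
variable (hsum : ∀ S S' : Finset ℕ+, Subgee 𝒢 S → Subgee 𝒢 S' → S.card + S'.card ≤ m)

include h

lemma W_inj {S T : Finset ℕ+} (hS : Subgee 𝒢 S) (hT : Subgee 𝒢 T) (he : W S = W T) :
    S = T := by
  have hinj := h.basis_indep.injective
  have he' : (Sum.elim (fun S : {S : Finset ℕ+ // Subgee 𝒢 S} => VSmon V S.1)
      (fun S : {S : Finset ℕ+ // Subgee 𝒢 S} => W S.1)) (Sum.inr ⟨S, hS⟩)
      = (Sum.elim (fun S : {S : Finset ℕ+ // Subgee 𝒢 S} => VSmon V S.1)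
      (fun S : {S : Finset ℕ+ // Subgee 𝒢 S} => W S.1)) (Sum.inr ⟨T, hT⟩) := he
  have := hinj he'
  simpa using this

lemma W_ne_zero {S : Finset ℕ+} (hS : Subgee 𝒢 S) : W S ≠ 0 := by
  have := h.basis_indep.ne_zero (Sum.inr ⟨S, hS⟩)
  simpa using this

lemma Vm_eq_zero {S : Finset ℕ+} (hsub : S ⊆ bra (nn - 1)) (hns : ¬ Subgee 𝒢 S) :
    VSmon V S = 0 := by
  by_contra hne
  exact hns ((h.VS_ne S hsub).1 hne)

include hsum

/-- The fundamental computation `V_a · W_T`. -/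
lemma VW_single {a : ℕ+} (ha : (a : ℕ) ≤ nn - 1) {T : Finset ℕ+} (hT : Subgee 𝒢 T) :
    (a ∉ T → V a * W T = 0) ∧
    (a ∈ T → ∃ c : ℚ, (c = 1 ∨ c = -1) ∧ V a * W T = c • W (T.erase a)) := by
  classical
  have hTm : T.card + T.card ≤ m := hsum T T hT hT
  set d := 1 + (m - T.card) with hd
  have hxd : V a * W T ∈ 𝒜 d := SetLike.mul_mem_graded (h.V_mem a ha) (h.W_mem T hT)
  -- every basis vector of degree d is W T'' with T''.card + 1 = T.card
  have hclass : ∀ i : Idx 𝒢, degI 𝒢 m i = d →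
      ∃ (T'' : Finset ℕ+) (hT'' : Subgee 𝒢 T''),
        i = Sum.inr ⟨T'', hT''⟩ ∧ T''.card + 1 = T.card := by
    rintro (⟨S', hS'⟩ | ⟨T'', hT''⟩) hdeg
    · exfalso
      have := hsum S' T hS' hT
      simp only [degI, Sum.elim_inl] at hdeg
      omega
    · refine ⟨T'', hT'', rfl, ?_⟩
      have := hsum T'' T'' hT'' hT''
      simp only [degI, Sum.elim_inr] at hdeg
      omega
  have hx := mem_span_deg h (x := V a * W T) (d := d) hxd
  rw [Submodule.mem_span_set] at hx
  obtain ⟨co, hsupp, hsum'⟩ := hx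
  -- elements of the support
  have hsupp' : ∀ mi ∈ co.support, ∃ (T₂ : Finset ℕ+) (hT₂ : Subgee 𝒢 T₂),
      mi = W T₂ ∧ T₂.card + 1 = T.card := by
    intro mi hmi
    obtain ⟨i, hi, hbi⟩ := hsupp hmi
    obtain ⟨T₂, hT₂, rfl, hc⟩ := hclass i hi
    exact ⟨T₂, hT₂, by rw [← hbi]; rfl, hc⟩
  -- the pairing computation
  have hpair : ∀ (T'' : Finset ℕ+), Subgee 𝒢 T'' → T''.card + 1 = T.card →
      co (W T'') • W ∅ = VSmon V T'' * (V a * W T) := by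
    intro T'' hT'' hcard
    rw [← hsum', Finsupp.sum, Finset.mul_sum]
    have hterm : ∀ mi ∈ co.support,
        VSmon V T'' * (co mi • mi) = if mi = W T'' then co mi • W ∅ else 0 := by
      intro mi hmi
      obtain ⟨T₂, hT₂, rfl, hc₂⟩ := hsupp' mi hmi
      rw [mul_smul_comm]
      rw [h.VW T'' T₂ hT'' hT₂ (by omega)]
      by_cases he : T'' = T₂
      · subst he; simp
      · have hne : W T₂ ≠ W T'' := fun hcon => he ((W_inj h hT₂ hT'' hcon).symm)
        simp [he, hne]
    rw [Finset.sum_congr rfl hterm, Finset.sum_ite_eq' co.support (W T'')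
      (fun mi => co mi • W ∅)]
    by_cases hmem : W T'' ∈ co.support
    · simp [hmem]
    · rw [Finsupp.notMem_support_iff.1 hmem]
      simp [hmem]
  -- compute `VSmon V T'' * (V a * W T)` from the axioms
  have hcompute : ∀ (T'' : Finset ℕ+), Subgee 𝒢 T'' → T''.card + 1 = T.card →
      (a ∈ T'' ∨ insert a T'' ≠ T) → VSmon V T'' * (V a * W T) = 0 := by
    intro T'' hT'' hcard hcase
    rw [← mul_assoc]
    by_cases haT : a ∈ T''
    · rw [Vm_mul_V_mem h haT (fun x hx => subgee_le h hT'' hx)]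
      exact zero_mul _
    · obtain ⟨c, hc, heq⟩ := Vm_mul_V_notmem h haT (fun x hx => by
        rcases Finset.mem_insert.1 hx with rfl | hx
        · exact ha
        · exact subgee_le h hT'' hx)
      rw [heq, smul_mul_assoc]
      have hne : insert a T'' ≠ T := hcase.resolve_left haT
      by_cases hsg : Subgee 𝒢 (insert a T'')
      · rw [h.VW _ T hsg hT (by rw [Finset.card_insert_of_notMem haT]; omega)]
        simp [hne]
      · rw [Vm_eq_zero h (fun x hx => by
          rcases Finset.mem_insert.1 hx with rfl | hx
          · exact mem_bra.2 ha
          · exact mem_bra.2 (subgee_le h hT'' hx)) hsg]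
        simp
  constructor
  · -- a ∉ T : all coefficients vanish
    intro haT
    have hzero : ∀ mi ∈ co.support, False := by
      intro mi hmi
      obtain ⟨T₂, hT₂, rfl, hc₂⟩ := hsupp' mi hmi
      have h1 := hpair T₂ hT₂ hc₂
      have h2 : insert a T₂ ≠ T := by
        intro hcon
        exact haT (hcon ▸ Finset.mem_insert_self a T₂)
      rw [hcompute T₂ hT₂ hc₂ (Or.inr h2)] at h1
      rcases smul_eq_zero.1 h1 with h3 | h3
      · exact Finsupp.mem_support_iff.1 hmi h3
      · exact W_ne_zero h (subgee_empty h.gee_nonempty) h3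
    have hempty : co.support = ∅ := Finset.eq_empty_of_forall_notMem hzero
    rw [← hsum', Finsupp.sum, hempty, Finset.sum_empty]
  · -- a ∈ T
    intro haT
    have hTpos : 1 ≤ T.card := Finset.card_pos.2 ⟨a, haT⟩
    set T₀ := T.erase a with hT₀def
    have hT₀ : Subgee 𝒢 T₀ := subgee_erase hT a
    have hcard₀ : T₀.card + 1 = T.card := by
      rw [hT₀def, Finset.card_erase_of_mem haT]; omega
    have haT₀ : a ∉ T₀ := Finset.notMem_erase a T
    have hins : insert a T₀ = T := Finset.insert_erase haT
    -- the coefficient at W T₀ equals ±1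
    obtain ⟨c, hc, heqc⟩ := Vm_mul_V_notmem h haT₀ (fun x hx => by
      rcases Finset.mem_insert.1 hx with rfl | hx
      · exact ha
      · exact subgee_le h hT₀ hx)
    have hmain : VSmon V T₀ * (V a * W T) = c • W ∅ := by
      rw [← mul_assoc, heqc, hins, smul_mul_assoc, h.VW T T hT hT rfl]
      simp
    have hco₀ : co (W T₀) = c := by
      have h1 := hpair T₀ hT₀ hcard₀
      rw [hmain] at h1
      have h2 : (co (W T₀) - c) • W ∅ = 0 := by
        rw [sub_smul, h1, sub_self]
      rcases smul_eq_zero.1 h2 with h3 | h3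
      · linarith [h3]
      · exact absurd h3 (W_ne_zero h (subgee_empty h.gee_nonempty))
    -- all other coefficients vanish
    have hothers : co.support ⊆ {W T₀} := by
      intro mi hmi
      obtain ⟨T₂, hT₂, rfl, hc₂⟩ := hsupp' mi hmi
      rw [Finset.mem_singleton]
      by_contra hne
      have hT₂ne : T₂ ≠ T₀ := fun hcon => hne (by rw [hcon])
      have h2 : insert a T₂ ≠ T := by
        intro hcon
        apply hT₂ne
        have : a ∉ T₂ → T₂ = T.erase a := by
          intro haT₂
          rw [← hcon, Finset.erase_insert haT₂]
        by_cases haT₂ : a ∈ T₂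
        · exfalso
          have h1 := hpair T₂ hT₂ hc₂
          rw [hcompute T₂ hT₂ hc₂ (Or.inl haT₂)] at h1
          rcases smul_eq_zero.1 h1 with h3 | h3
          · exact Finsupp.mem_support_iff.1 hmi h3
          · exact W_ne_zero h (subgee_empty h.gee_nonempty) h3
        · exact this haT₂
      have h1 := hpair T₂ hT₂ hc₂
      rw [hcompute T₂ hT₂ hc₂ (Or.inr h2)] at h1
      rcases smul_eq_zero.1 h1 with h3 | h3
      · exact Finsupp.mem_support_iff.1 hmi h3
      · exact W_ne_zero h (subgee_empty h.gee_nonempty) h3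
    refine ⟨c, hc, ?_⟩
    have hsingle : co = Finsupp.single (W T₀) (co (W T₀)) :=
      Finsupp.support_subset_singleton.1 hothers
    rw [← hsum', hsingle, Finsupp.sum_single_index (by simp), hco₀]

end Alg3
end PolyAux
namespace PolyAux
section Alg4

variable {R : Type} [Ring R] [Algebra ℚ R] [FiniteDimensional ℚ R]
variable {𝒜 : ℕ → Submodule ℚ R} [GradedAlgebra 𝒜] {V : ℕ+ → R} {W : Finset ℕ+ → R}
variable {nn m : ℕ} {𝒢 : Finset (Finset ℕ+)}
variable (h : IsPolygonAlgebra nn m 𝒢 R 𝒜 V W)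
variable (hsum : ∀ S S' : Finset ℕ+, Subgee 𝒢 S → Subgee 𝒢 S' → S.card + S'.card ≤ m)

include h hsum

lemma Vm_mul_W : ∀ (n : ℕ) (S T : Finset ℕ+), S.card = n → Subgee 𝒢 S → Subgee 𝒢 T →
    (VSmon V S * W T = 0) ∨ (S ⊆ T ∧ ∃ c : ℚ, VSmon V S * W T = c • W (T \ S)) := by
  classical
  intro n
  induction n with
  | zero =>
    intro S T hcard hS hT
    have hSe : S = ∅ := Finset.card_eq_zero.1 hcard
    subst hSe
    right
    refine ⟨Finset.empty_subset T, 1, ?_⟩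
    rw [show VSmon V ∅ = 1 from by simp [VSmon, Finset.sort_empty], one_mul,
      Finset.sdiff_empty, one_smul]
  | succ n ih =>
    intro S T hcard hS hT
    have hne : S.Nonempty := Finset.card_pos.1 (by omega)
    set M := S.max' hne with hM
    have hMS : M ∈ S := S.max'_mem hne
    set S' := S.erase M with hS'def
    have hS' : Subgee 𝒢 S' := subgee_erase hS M
    have hcard' : S'.card = n := by
      rw [hS'def, Finset.card_erase_of_mem hMS]; omega
    have hMS' : M ∉ S' := Finset.notMem_erase M S
    have hins : insert M S' = S := Finset.insert_erase hMS
    obtain ⟨c, hc, heqc⟩ := Vm_mul_V_notmem h hMS' (fun x hx => by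
      rcases Finset.mem_insert.1 hx with rfl | hx
      · exact subgee_le h hS hMS
      · exact subgee_le h hS' hx)
    rw [hins] at heqc
    have hexp : VSmon V S = c • (VSmon V S' * V M) := by
      rw [heqc, smul_smul]
      rcases hc with rfl | rfl <;> norm_num
    have hMle : (M : ℕ) ≤ nn - 1 := subgee_le h hS hMS
    by_cases hMT : M ∈ T
    · obtain ⟨cM, hcM, heqM⟩ := (VW_single h hsum hMle hT).2 hMT
      have hstep : VSmon V S * W T = (c * cM) • (VSmon V S' * W (T.erase M)) := by
        rw [hexp, smul_mul_assoc, mul_assoc, heqM, mul_smul_comm, smul_smul]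
      rcases ih S' (T.erase M) hcard' hS' (subgee_erase hT M) with h0 | ⟨hsub, c', heq'⟩
      · left; rw [hstep, h0, smul_zero]
      · right
        constructor
        · intro x hx
          by_cases hxM : x = M
          · exact hxM ▸ hMT
          · exact Finset.mem_of_mem_erase (hsub (by
              rw [hS'def]; exact Finset.mem_erase.2 ⟨hxM, hx⟩))
        · refine ⟨c * cM * c', ?_⟩
          have hsd : T \ S = (T.erase M) \ S' := by
            ext b
            by_cases hbM : b = M
            · subst hbM
              simp [Finset.mem_sdiff, Finset.mem_erase, hMS, hMT]
            · simp [Finset.mem_sdiff, Finset.mem_erase, hbM, hS'def]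
          rw [hstep, heq', smul_smul, hsd]
    · left
      rw [hexp, smul_mul_assoc, mul_assoc, (VW_single h hsum hMle hT).1 hMT, mul_zero, smul_zero]

lemma WW_zero {S T : Finset ℕ+} (hS : Subgee 𝒢 S) (hT : Subgee 𝒢 T) :
    W S * W T = 0 := by
  classical
  rcases eq_or_lt_of_le (hsum S T hS hT) with heq | hlt
  · exact h.WW S T hS hT heq
  · set d := (m - S.card) + (m - T.card) with hd
    have hxd : W S * W T ∈ 𝒜 d := SetLike.mul_mem_graded (h.W_mem S hS) (h.W_mem T hT)
    have hx := mem_span_deg h (x := W S * W T) (d := d) hxd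
    have hempty : {i : Idx 𝒢 | degI 𝒢 m i = d} = ∅ := by
      ext i
      simp only [Set.mem_setOf_eq, Set.mem_empty_iff_false, iff_false]
      have hSm := hsum S S hS hS
      have hTm := hsum T T hT hT
      rcases i with ⟨S', hS'⟩ | ⟨T', hT'⟩
      · have := hsum S' S' hS' hS'
        simp only [degI, Sum.elim_inl]
        omega
      · have := hsum T' T' hT' hT'
        simp only [degI, Sum.elim_inr]
        omega
    rw [hempty, Set.image_empty, Submodule.span_empty, Submodule.mem_bot] at hx
    exact hx

end Alg4
end PolyAux
namespace PolyAux
section Tens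

variable {R : Type} [Ring R] [Algebra ℚ R] [FiniteDimensional ℚ R]
variable (𝒜 : ℕ → Submodule ℚ R) [GradedAlgebra 𝒜]

lemma muMap_tm (x y : R) : muMap 𝒜 (tm 𝒜 x y) = x * y := by
  simp [muMap, tm]

lemma muMap_ubar (u : R) : muMap 𝒜 (ubar 𝒜 u) = 0 := by
  rw [ubar, map_sub, muMap_tm, muMap_tm, mul_one, one_mul, sub_self]

lemma tm_smul_right (c : ℚ) (x y : R) : tm 𝒜 x (c • y) = c • tm 𝒜 x y := by
  rw [tm, tm, TensorProduct.tmul_smul, map_smul]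

lemma tm_smul_left (c : ℚ) (x y : R) : tm 𝒜 (c • x) y = c • tm 𝒜 x y := by
  rw [tm, tm, ← TensorProduct.smul_tmul', map_smul]

lemma tm_zero_right (x : R) : tm 𝒜 x 0 = 0 := by
  rw [tm, TensorProduct.tmul_zero, map_zero]

lemma tm_zero_left (y : R) : tm 𝒜 0 y = 0 := by
  rw [tm, TensorProduct.zero_tmul, map_zero]

lemma tm_add_right (x y y' : R) : tm 𝒜 x (y + y') = tm 𝒜 x y + tm 𝒜 x y' := by
  rw [tm, tm, tm, TensorProduct.tmul_add, map_add]

lemma tm_add_left (x x' y : R) : tm 𝒜 (x + x') y = tm 𝒜 x y + tm 𝒜 x' y := by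
  rw [tm, tm, tm, TensorProduct.add_tmul, map_add]

lemma uzsmul_eq (n : ℕ) (z : 𝒜 ᵍ⊗[ℚ] 𝒜) :
    ((-1 : ℤˣ))^n • z = ((-1 : ℚ))^n • z := by
  rcases Nat.even_or_odd n with he | ho
  · rw [he.neg_one_pow, he.neg_one_pow, one_smul, one_smul]
  · rw [ho.neg_one_pow, ho.neg_one_pow, Units.smul_def]
    have h1 : ((-1 : ℤˣ) : ℤ) = -1 := rfl
    rw [h1, neg_one_zsmul, neg_one_smul]

lemma tm_mul_tm {p q : ℕ} {y x' : R} (x y' : R) (hy : y ∈ 𝒜 p) (hx' : x' ∈ 𝒜 q) :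
    tm 𝒜 x y * tm 𝒜 x' y' = ((-1 : ℚ))^(p * q) • tm 𝒜 (x * x') (y * y') := by
  have hkey := GradedTensorProduct.tmul_coe_mul_coe_tmul (R := ℚ) 𝒜 𝒜 x
    (⟨y, hy⟩ : 𝒜 p) (⟨x', hx'⟩ : 𝒜 q) y'
  rw [uzsmul_eq] at hkey
  exact hkey

lemma ubar_mul_tm {p : ℕ} {u w : R} (v : R) (hu : u ∈ 𝒜 p) (hw : w ∈ 𝒜 1) :
    ubar 𝒜 w * tm 𝒜 u v = tm 𝒜 (w * u) v - ((-1 : ℚ))^p • tm 𝒜 u (w * v) := by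
  rw [ubar, sub_mul]
  rw [tm_mul_tm 𝒜 w v (SetLike.one_mem_graded _) hu]
  rw [tm_mul_tm 𝒜 (1 : R) v hw hu]
  rw [zero_mul, pow_zero, one_smul, one_mul, one_mul, one_mul]

end Tens
end PolyAux
namespace PolyAux
section Filt

variable {R : Type} [Ring R] [Algebra ℚ R] [FiniteDimensional ℚ R]
variable {𝒜 : ℕ → Submodule ℚ R} [GradedAlgebra 𝒜] {V : ℕ+ → R} {W : Finset ℕ+ → R}
variable {nn m : ℕ} {𝒢 : Finset (Finset ℕ+)} {κ : ℕ}

variable (V W 𝒢 κ) in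
/-- basis elements with weights -/
def IsB (x : R) (wx : ℕ) : Prop :=
  (∃ S, Subgee 𝒢 S ∧ x = VSmon V S ∧ wx = S.card) ∨
  (∃ S, Subgee 𝒢 S ∧ x = W S ∧ wx = κ - S.card)

variable (𝒜 V W 𝒢 κ) in
def genSet (w : ℕ) : Set (𝒜 ᵍ⊗[ℚ] 𝒜) :=
  {q | ∃ x y wx wy, IsB V W 𝒢 κ x wx ∧ IsB V W 𝒢 κ y wy ∧ w ≤ wx + wy ∧ q = tm 𝒜 x y}

variable (𝒜 V W 𝒢 κ) in
noncomputable def FF (w : ℕ) : Submodule ℚ (𝒜 ᵍ⊗[ℚ] 𝒜) := Submodule.span ℚ (genSet 𝒜 V W 𝒢 κ w)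

variable (h : IsPolygonAlgebra nn m 𝒢 R 𝒜 V W)
variable (hsum : ∀ S S' : Finset ℕ+, Subgee 𝒢 S → Subgee 𝒢 S' → S.card + S'.card ≤ m)
variable (hκ : ∀ S : Finset ℕ+, Subgee 𝒢 S → S.card < κ)

lemma IsB_w_le (hκ' : ∀ S : Finset ℕ+, Subgee 𝒢 S → S.card < κ) {x : R} {wx : ℕ}
    (hx : IsB V W 𝒢 κ x wx) : wx ≤ κ := by
  rcases hx with ⟨S, hS, _, rfl⟩ | ⟨S, hS, _, rfl⟩
  · exact le_of_lt (hκ' S hS)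
  · omega

include h in
lemma IsB_mem {x : R} {wx : ℕ} (hx : IsB V W 𝒢 κ x wx) : ∃ d, x ∈ 𝒜 d := by
  rcases hx with ⟨S, hS, rfl, _⟩ | ⟨S, hS, rfl, _⟩
  · exact ⟨S.card, Vm_mem h hS⟩
  · exact ⟨m - S.card, h.W_mem S hS⟩

include h hsum hκ in
lemma mul_IsB {x x' : R} {wx wx' : ℕ} (hx : IsB V W 𝒢 κ x wx) (hx' : IsB V W 𝒢 κ x' wx') :
    x * x' = 0 ∨ ∃ (z : R) (wz : ℕ) (c : ℚ), IsB V W 𝒢 κ z wz ∧ wx + wx' ≤ wz ∧ x * x' = c • z := by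
  classical
  rcases hx with ⟨S, hS, rfl, rfl⟩ | ⟨S, hS, rfl, rfl⟩ <;>
    rcases hx' with ⟨S', hS', rfl, rfl⟩ | ⟨S', hS', rfl, rfl⟩
  · -- V * V
    by_cases hdisj : Disjoint S S'
    · obtain ⟨c, _, heq⟩ := Vm_mul_Vm_disj h hS hS' hdisj
      by_cases hsg : Subgee 𝒢 (S ∪ S')
      · right
        refine ⟨VSmon V (S ∪ S'), (S ∪ S').card, c, Or.inl ⟨S ∪ S', hsg, rfl, rfl⟩, ?_, heq⟩
        rw [Finset.card_union_of_disjoint hdisj]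
      · left
        rw [heq, Vm_eq_zero h ?_ hsg, smul_zero]
        intro a ha
        rcases Finset.mem_union.1 ha with ha | ha
        · exact mem_bra.2 (subgee_le h hS ha)
        · exact mem_bra.2 (subgee_le h hS' ha)
    · exact Or.inl (Vm_mul_Vm_ndisj h hS hS' hdisj)
  · -- V * W
    rcases Vm_mul_W h hsum S.card S S' rfl hS hS' with h0 | ⟨hsub, c, heq⟩
    · exact Or.inl h0
    · right
      refine ⟨W (S' \ S), κ - (S' \ S).card, c, Or.inr ⟨S' \ S, subgee_sdiff hS', rfl, rfl⟩,
        ?_, heq⟩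
      rw [Finset.card_sdiff_of_subset hsub]
      have h1 := hκ S' hS'
      have h2 := Finset.card_le_card hsub
      omega
  · -- W * V
    have hcomm := h.gcomm (m - S.card) S'.card (W S) (VSmon V S') (h.W_mem S hS) (Vm_mem h hS')
    rcases Vm_mul_W h hsum S'.card S' S rfl hS' hS with h0 | ⟨hsub, c, heq⟩
    · left; rw [hcomm, h0, smul_zero]
    · right
      refine ⟨W (S \ S'), κ - (S \ S').card, ((-1 : ℚ)) ^ ((m - S.card) * S'.card) * c,
        Or.inr ⟨S \ S', subgee_sdiff hS, rfl, rfl⟩, ?_, ?_⟩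
      · rw [Finset.card_sdiff_of_subset hsub]
        have h1 := hκ S hS
        have h2 := Finset.card_le_card hsub
        omega
      · rw [hcomm, heq, smul_smul]
  · -- W * W
    exact Or.inl (WW_zero h hsum hS hS')

lemma tm_one_one : tm 𝒜 (1 : R) 1 = 1 := rfl

lemma VSmon_empty : VSmon V (∅ : Finset ℕ+) = 1 := by
  simp [VSmon, Finset.sort_empty]

include h hsum hκ in
lemma FF_mul (a b : ℕ) : FF 𝒜 V W 𝒢 κ a * FF 𝒜 V W 𝒢 κ b ≤ FF 𝒜 V W 𝒢 κ (a + b) := by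
  rw [FF, FF, Submodule.span_mul_span]
  refine Submodule.span_le.2 ?_
  rintro q ⟨q₁, hq₁, q₂, hq₂, rfl⟩
  obtain ⟨x, y, wx, wy, hx, hy, hw, rfl⟩ := hq₁
  obtain ⟨x', y', wx', wy', hx', hy', hw', rfl⟩ := hq₂
  obtain ⟨dy, hdy⟩ := IsB_mem h hy
  obtain ⟨dx', hdx'⟩ := IsB_mem h hx'
  show tm 𝒜 x y * tm 𝒜 x' y' ∈ (FF 𝒜 V W 𝒢 κ (a + b) : Set (𝒜 ᵍ⊗[ℚ] 𝒜))
  rw [SetLike.mem_coe]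
  rw [tm_mul_tm 𝒜 x y' hdy hdx']
  rcases mul_IsB h hsum hκ hx hx' with h0 | ⟨z, wz, c, hz, hwz, heq⟩
  · rw [h0, tm_zero_left, smul_zero]; exact Submodule.zero_mem _
  rcases mul_IsB h hsum hκ hy hy' with h0' | ⟨z', wz', c', hz', hwz', heq'⟩
  · rw [h0', tm_zero_right, smul_zero]; exact Submodule.zero_mem _
  rw [heq, heq', tm_smul_left, tm_smul_right, smul_smul, smul_smul]
  refine Submodule.smul_mem _ _ (Submodule.subset_span ?_)
  exact ⟨z, z', wz, wz', hz, hz', by omega, rfl⟩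

lemma FF_antitone {a b : ℕ} (hab : a ≤ b) : FF 𝒜 V W 𝒢 κ b ≤ FF 𝒜 V W 𝒢 κ a :=
  Submodule.span_mono (fun q ⟨x, y, wx, wy, hx, hy, hw, hq⟩ =>
    ⟨x, y, wx, wy, hx, hy, le_trans hab hw, hq⟩)

lemma FF_bot (hκ' : ∀ S : Finset ℕ+, Subgee 𝒢 S → S.card < κ) :
    FF 𝒜 V W 𝒢 κ (2 * κ + 1) = ⊥ := by
  rw [FF]
  convert Submodule.span_empty
  ext q
  simp only [Set.mem_empty_iff_false, iff_false]
  rintro ⟨x, y, wx, wy, hx, hy, hw, rfl⟩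
  have h1 := IsB_w_le hκ' hx
  have h2 := IsB_w_le hκ' hy
  omega

include h in
lemma one_mem_FF0 (hne : 𝒢.Nonempty) : (1 : 𝒜 ᵍ⊗[ℚ] 𝒜) ∈ FF 𝒜 V W 𝒢 κ 0 := by
  rw [← tm_one_one]
  refine Submodule.subset_span ⟨1, 1, 0, 0, ?_, ?_, le_refl _, rfl⟩ <;>
    exact Or.inl ⟨∅, subgee_empty hne, VSmon_empty.symm, by simp⟩

include h hsum hκ in
lemma zd_mem_FF1 {q : 𝒜 ᵍ⊗[ℚ] 𝒜} (hq : muMap 𝒜 q = 0) : q ∈ FF 𝒜 V W 𝒢 κ 1 := by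
  classical
  set MM := Submodule.span ℚ (genSet 𝒜 V W 𝒢 κ 1 ∪ {tm 𝒜 1 1}) with hMM
  -- step 1: everything is in MM
  have hgen : ∀ i j : Idx 𝒢, tm 𝒜 (bfun V W i) (bfun V W j) ∈ MM := by
    intro i j
    have hIsB : ∀ i : Idx 𝒢, ∃ w, IsB V W 𝒢 κ (bfun V W i) w ∧ (w = 0 → bfun V W i = 1) := by
      rintro (⟨S, hS⟩ | ⟨S, hS⟩)
      · refine ⟨S.card, Or.inl ⟨S, hS, rfl, rfl⟩, fun hw => ?_⟩
        have : S = ∅ := Finset.card_eq_zero.1 hw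
        show VSmon V S = 1
        rw [this, VSmon_empty]
      · refine ⟨κ - S.card, Or.inr ⟨S, hS, rfl, rfl⟩, fun hw => ?_⟩
        exact absurd hw (by have := hκ S hS; omega)
    obtain ⟨wi, hwi, hwi0⟩ := hIsB i
    obtain ⟨wj, hwj, hwj0⟩ := hIsB j
    by_cases hz : 1 ≤ wi + wj
    · exact Submodule.subset_span (Or.inl ⟨_, _, wi, wj, hwi, hwj, hz, rfl⟩)
    · rw [hwi0 (by omega), hwj0 (by omega)]
      exact Submodule.subset_span (Or.inr rfl)
  have hTOP : ∀ q' : 𝒜 ᵍ⊗[ℚ] 𝒜, q' ∈ MM := by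
    intro q'
    have hq' : q' = GradedTensorProduct.of ℚ 𝒜 𝒜 ((GradedTensorProduct.of ℚ 𝒜 𝒜).symm q') := by
      simp
    rw [hq']
    induction ((GradedTensorProduct.of ℚ 𝒜 𝒜).symm q') using TensorProduct.induction_on with
    | zero => rw [map_zero]; exact Submodule.zero_mem _
    | add a b ha hb => rw [map_add]; exact Submodule.add_mem _ ha hb
    | tmul x y =>
      have hx : x ∈ Submodule.span ℚ (Set.range (bfun V W (𝒢 := 𝒢))) := by
        rw [show Set.range (bfun V W (𝒢 := 𝒢)) = Set.range
          (Sum.elim (fun S : {S : Finset ℕ+ // Subgee 𝒢 S} => VSmon V S.1)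
            (fun S : {S : Finset ℕ+ // Subgee 𝒢 S} => W S.1)) from rfl, h.basis_span]
        trivial
      have hy : y ∈ Submodule.span ℚ (Set.range (bfun V W (𝒢 := 𝒢))) := by
        rw [show Set.range (bfun V W (𝒢 := 𝒢)) = Set.range
          (Sum.elim (fun S : {S : Finset ℕ+ // Subgee 𝒢 S} => VSmon V S.1)
            (fun S : {S : Finset ℕ+ // Subgee 𝒢 S} => W S.1)) from rfl, h.basis_span]
        trivial
      show tm 𝒜 x y ∈ MM
      refine Submodule.span_induction (p := fun x _ => tm 𝒜 x y ∈ MM) ?_ ?_ ?_ ?_ hx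
      · rintro x' ⟨i, rfl⟩
        refine Submodule.span_induction (p := fun y _ => tm 𝒜 (bfun V W i) y ∈ MM)
          ?_ ?_ ?_ ?_ hy
        · rintro y' ⟨j, rfl⟩; exact hgen i j
        · show tm 𝒜 (bfun V W i) 0 ∈ MM
          rw [tm_zero_right]; exact Submodule.zero_mem _
        · intro a b _ _ ha hb
          show tm 𝒜 (bfun V W i) (a + b) ∈ MM
          rw [tm_add_right]; exact Submodule.add_mem _ ha hb
        · intro c a _ ha
          show tm 𝒜 (bfun V W i) (c • a) ∈ MM
          rw [tm_smul_right]; exact Submodule.smul_mem _ _ ha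
      · show tm 𝒜 0 y ∈ MM
        rw [tm_zero_left]; exact Submodule.zero_mem _
      · intro a b _ _ ha hb
        show tm 𝒜 (a + b) y ∈ MM
        rw [tm_add_left]; exact Submodule.add_mem _ ha hb
      · intro c a _ ha
        show tm 𝒜 (c • a) y ∈ MM
        rw [tm_smul_left]; exact Submodule.smul_mem _ _ ha
  -- step 2: decompose q
  have hqMM := hTOP q
  rw [hMM, Set.union_comm, Submodule.span_union] at hqMM
  obtain ⟨y, hy, z, hz, hyz⟩ := Submodule.mem_sup.1 hqMM
  rw [Submodule.mem_span_singleton] at hy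
  obtain ⟨c, rfl⟩ := hy
  -- step 3: mu of the FF 1 part lies in the span of positive basis elements
  set iempty : Idx 𝒢 := Sum.inl ⟨∅, subgee_empty h.gee_nonempty⟩ with hie
  set Apos := Submodule.span ℚ (bfun V W '' {i : Idx 𝒢 | i ≠ iempty}) with hApos
  have hmuz : muMap 𝒜 z ∈ Apos := by
    refine Submodule.span_induction (p := fun w _ => muMap 𝒜 w ∈ Apos) ?_ ?_ ?_ ?_ hz
    · rintro w ⟨x, y', wx, wy, hx, hy', hw, rfl⟩
      rw [muMap_tm]
      rcases mul_IsB h hsum hκ hx hy' with h0 | ⟨zz, wz, cc, hzz, hwz, heq⟩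
      · rw [h0]; exact Submodule.zero_mem _
      rw [heq]
      refine Submodule.smul_mem _ _ (Submodule.subset_span ?_)
      rcases hzz with ⟨S, hS, rfl, rfl⟩ | ⟨S, hS, rfl, rfl⟩
      · refine ⟨Sum.inl ⟨S, hS⟩, ?_, rfl⟩
        simp only [Set.mem_setOf_eq, hie]
        intro hcon
        have hSe : S = ∅ := by
          have := congrArg (fun t => match t with
            | Sum.inl s => s.1
            | Sum.inr s => s.1) hcon
          simpa using this
        subst hSe
        simp only [Finset.card_empty] at hwz
        omega
      · exact ⟨Sum.inr ⟨S, hS⟩, by simp [hie], rfl⟩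
    · show muMap 𝒜 0 ∈ Apos
      rw [map_zero]; exact Submodule.zero_mem _
    · intro a b _ _ ha hb
      show muMap 𝒜 (a + b) ∈ Apos
      rw [map_add]; exact Submodule.add_mem _ ha hb
    · intro cc a _ ha
      show muMap 𝒜 (cc • a) ∈ Apos
      rw [map_smul]; exact Submodule.smul_mem _ _ ha
  -- step 4: conclude c = 0
  have hone : (1 : R) = bfun V W iempty := by
    show (1 : R) = VSmon V ∅
    rw [VSmon_empty]
  have hc0 : c = 0 := by
    by_contra hc
    have hmu : muMap 𝒜 (c • tm 𝒜 1 1) + muMap 𝒜 z = 0 := by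
      rw [← map_add, hyz, hq]
    rw [map_smul, muMap_tm, one_mul] at hmu
    have h1 : c • (1 : R) = -muMap 𝒜 z := eq_neg_of_add_eq_zero_left hmu
    have h2 : c • (1 : R) ∈ Apos := h1 ▸ Submodule.neg_mem _ hmuz
    have h3 : (1 : R) ∈ Apos := by
      have := Submodule.smul_mem Apos c⁻¹ h2
      rwa [smul_smul, inv_mul_cancel₀ hc, one_smul] at this
    rw [hone] at h3
    exact h.basis_indep.notMem_span_image (by simp) h3
  subst hc0
  rw [← hyz, zero_smul, zero_add]
  exact hz

include h hsum hκ in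
lemma prod_mem_FF (L : List (𝒜 ᵍ⊗[ℚ] 𝒜)) (hL : ∀ q ∈ L, muMap 𝒜 q = 0) :
    L.prod ∈ FF 𝒜 V W 𝒢 κ L.length := by
  induction L with
  | nil =>
    rw [List.prod_nil, List.length_nil]
    exact one_mem_FF0 h h.gee_nonempty
  | cons q L ih =>
    rw [List.prod_cons, List.length_cons]
    have h1 : q ∈ FF 𝒜 V W 𝒢 κ 1 := zd_mem_FF1 h hsum hκ (hL q List.mem_cons_self)
    have h2 : L.prod ∈ FF 𝒜 V W 𝒢 κ L.length := ih (fun x hx => hL x (List.mem_cons_of_mem _ hx))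
    have h3 := Submodule.mul_mem_mul h1 h2
    have h4 := FF_mul h hsum hκ 1 L.length h3
    rwa [show 1 + L.length = L.length + 1 from by omega] at h4

include h hsum hκ in
lemma zcl_upper {b : ℕ} (hb : b ∈ zclSet 𝒜) : b ≤ 2 * κ := by
  obtain ⟨L, hlen, hzd, hne⟩ := hb
  by_contra hcon
  apply hne
  have h1 := prod_mem_FF h hsum hκ L hzd
  have h2 : FF 𝒜 V W 𝒢 κ L.length ≤ FF 𝒜 V W 𝒢 κ (2 * κ + 1) := FF_antitone (by omega)
  have h3 := h2 h1
  rw [FF_bot hκ] at h3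
  exact (Submodule.mem_bot _).1 h3

end Filt
end PolyAux
namespace PolyAux
section Lower

variable {R : Type} [Ring R] [Algebra ℚ R] [FiniteDimensional ℚ R]
variable {𝒜 : ℕ → Submodule ℚ R} [GradedAlgebra 𝒜] {V : ℕ+ → R} {W : Finset ℕ+ → R}

def gfun : ℕ → ℕ+ := fun i => ⟨i + 1, i.succ_pos⟩

lemma gfun_inj : Function.Injective gfun := by
  intro a b hab
  have : a + 1 = b + 1 := congrArg (fun x : ℕ+ => (x : ℕ)) hab
  omega

lemma bra_eq_image (j : ℕ) : bra j = (Finset.range j).image gfun := rfl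

lemma mem_image_Ico {x : ℕ+} {a b : ℕ} :
    x ∈ (Finset.Ico a b).image gfun ↔ a + 1 ≤ (x : ℕ) ∧ (x : ℕ) ≤ b := by
  simp only [Finset.mem_image, Finset.mem_Ico]
  constructor
  · rintro ⟨i, hi, rfl⟩
    have hval : ((gfun i : ℕ+) : ℕ) = i + 1 := rfl
    rw [hval]
    omega
  · rintro ⟨h1, h2⟩
    refine ⟨(x : ℕ) - 1, ⟨by omega, by omega⟩, ?_⟩
    have := x.pos
    apply Subtype.ext
    show (x : ℕ) - 1 + 1 = (x : ℕ)
    omega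

lemma card_image_Ico (a b : ℕ) : ((Finset.Ico a b).image gfun).card = b - a := by
  rw [Finset.card_image_of_injective _ gfun_inj, Nat.card_Ico]

lemma bra_card (j : ℕ) : (bra j).card = j := by
  rw [bra_eq_image, Finset.card_image_of_injective _ gfun_inj, Finset.card_range]

lemma bra_erase (j : ℕ) : (bra (j + 1)).erase (gfun j) = bra j := by
  ext x
  rw [Finset.mem_erase, mem_bra, mem_bra]
  have hgx : (x = gfun j) ↔ ((x : ℕ) = j + 1) := by
    constructor
    · rintro rfl; rfl
    · intro hx; apply Subtype.ext; exact hx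
  rw [Ne, hgx]
  omega

lemma gfun_mem_bra (j : ℕ) : gfun j ∈ bra (j + 1) := by
  rw [mem_bra]; show j + 1 ≤ j + 1; omega

variable {k : ℕ}

/-- the sets `{k+2, …, r+1}`, i.e. the image of `[k+1, r)`. -/
def SSet (k r : ℕ) : Finset ℕ+ := (Finset.Ico (k + 1) r).image gfun

lemma SSet_base : SSet k (k + 1) = ∅ := by
  rw [SSet, Finset.Ico_self, Finset.image_empty]

lemma SSet_erase {r : ℕ} (hr : k + 1 ≤ r) : (SSet k (r + 1)).erase (gfun r) = SSet k r := by
  ext x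
  rw [Finset.mem_erase, SSet, SSet, mem_image_Ico, mem_image_Ico]
  have hgx : (x = gfun r) ↔ ((x : ℕ) = r + 1) := by
    constructor
    · rintro rfl; rfl
    · intro hx; apply Subtype.ext; exact hx
  rw [Ne, hgx]
  omega

lemma gfun_mem_SSet {r : ℕ} (hr : k + 1 ≤ r) : gfun r ∈ SSet k (r + 1) := by
  rw [SSet, mem_image_Ico]
  show k + 1 + 1 ≤ r + 1 ∧ r + 1 ≤ r + 1
  omega

lemma SSet_card (r : ℕ) : (SSet k r).card = r - (k + 1) := card_image_Ico _ _

variable (hk : 2 ≤ k) {𝒢 : Finset (Finset ℕ+)} (hG : 𝒢 = {SSet k (2 * k)})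

include hG

lemma subgee_SSet {r : ℕ} (hr : r ≤ 2 * k) : Subgee 𝒢 (SSet k r) := by
  refine ⟨SSet k (2 * k), by rw [hG]; exact Finset.mem_singleton_self _, (SSet k r).val, ?_, ?_⟩
  · rw [Finset.val_le_iff]
    rw [SSet, SSet]
    exact Finset.image_subset_image (Finset.Ico_subset_Ico le_rfl hr)
  · exact rel_refl _

include hk

lemma subgee_bra {j : ℕ} (hj : j ≤ k - 1) : Subgee 𝒢 (bra j) := by
  refine ⟨SSet k (2 * k), by rw [hG]; exact Finset.mem_singleton_self _,
    (SSet k (k + 1 + j)).val, ?_, ?_⟩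
  · rw [Finset.val_le_iff, SSet, SSet]
    exact Finset.image_subset_image (Finset.Ico_subset_Ico le_rfl (by omega))
  · refine rel_of_card_of_le ?_ ?_
    · show Multiset.card (bra j).val = _
      have h1 : Multiset.card (bra j).val = (bra j).card := rfl
      have h2 : Multiset.card (SSet k (k + 1 + j)).val = (SSet k (k + 1 + j)).card := rfl
      rw [h1, h2, bra_card, SSet_card]
      omega
    · intro a ha b hb
      have ha' : a ∈ bra j := ha
      have hb' : b ∈ SSet k (k + 1 + j) := hb
      rw [mem_bra] at ha'
      rw [SSet, mem_image_Ico] at hb'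
      have : (a : ℕ) ≤ (b : ℕ) := by omega
      exact this

lemma hsum_spec : ∀ S S' : Finset ℕ+, Subgee 𝒢 S → Subgee 𝒢 S' →
    S.card + S'.card ≤ 2 * k - 2 := by
  have hcard : ∀ S : Finset ℕ+, Subgee 𝒢 S → S.card ≤ k - 1 := by
    intro S hS
    obtain ⟨G, hGmem, hle⟩ := subgee_card hS
    rw [hG, Finset.mem_singleton] at hGmem
    subst hGmem
    rw [SSet_card] at hle
    omega
  intro S S' hS hS'
  have := hcard S hS
  have := hcard S' hS'
  omega

lemma hkappa_spec : ∀ S : Finset ℕ+, Subgee 𝒢 S → S.card < k := by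
  intro S hS
  obtain ⟨G, hGmem, hle⟩ := subgee_card hS
  rw [hG, Finset.mem_singleton] at hGmem
  subst hGmem
  rw [SSet_card] at hle
  omega

variable (h : IsPolygonAlgebra (2 * k + 1) (2 * k - 2) 𝒢 R 𝒜 V W)

include h

-- the VW computation specialized
lemma VWs {a : ℕ+} (ha : (a : ℕ) ≤ 2 * k) {T : Finset ℕ+} (hT : Subgee 𝒢 T) :
    (a ∉ T → V a * W T = 0) ∧
    (a ∈ T → ∃ c : ℚ, (c = 1 ∨ c = -1) ∧ V a * W T = c • W (T.erase a)) := by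
  exact VW_single h (hsum_spec hk hG) (by omega) hT

lemma WS0_mem : W (bra (k - 1)) ∈ 𝒜 (k - 1) := by
  have := h.W_mem (bra (k - 1)) (subgee_bra hk hG le_rfl)
  rwa [bra_card, show 2 * k - 2 - (k - 1) = k - 1 from by omega] at this

/-- Phase 1 chains -/
lemma CH1 : ∀ n, n ≤ k - 1 → ∃ c : ℚ, c ≠ 0 ∧
    ((List.range' (k + 1) n).map (fun j => ubar 𝒜 (V (gfun j)))).prod *
      tm 𝒜 (W (bra (k - 1))) (W (SSet k (k + 1 + n)))
      = (((-1 : ℚ)) ^ (k * n) * c) • tm 𝒜 (W (bra (k - 1))) (W (SSet k (k + 1))) ∧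
    ((List.range' (k + 1) n).map (fun j => ubar 𝒜 (V (gfun j)))).prod *
      tm 𝒜 (W (SSet k (k + 1 + n))) (W (bra (k - 1)))
      = c • tm 𝒜 (W (SSet k (k + 1))) (W (bra (k - 1))) := by
  intro n
  induction n with
  | zero =>
    intro _
    refine ⟨1, one_ne_zero, ?_, ?_⟩ <;>
      simp
  | succ n ih =>
    intro hn
    obtain ⟨c, hc, hch1, hch2⟩ := ih (by omega)
    set M : ℕ+ := gfun (k + 1 + n) with hM
    have hMval : (M : ℕ) = k + 2 + n := by show k + 1 + n + 1 = k + 2 + n; omega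
    have hMle : (M : ℕ) ≤ 2 * k := by rw [hMval]; omega
    have hVM : V M ∈ 𝒜 1 := h.V_mem M (by omega)
    have hsplit : ((List.range' (k + 1) (n + 1)).map (fun j => ubar 𝒜 (V (gfun j)))).prod
        = ((List.range' (k + 1) n).map (fun j => ubar 𝒜 (V (gfun j)))).prod
          * ubar 𝒜 (V M) := by
      rw [List.range'_1_concat, List.map_append, List.prod_append]
      simp [hM]
    have hSS1 : Subgee 𝒢 (SSet k (k + 1 + (n + 1))) := subgee_SSet hG (by omega)
    have hMmem : M ∈ SSet k (k + 1 + (n + 1)) := by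
      rw [show k + 1 + (n + 1) = (k + 1 + n) + 1 from by omega]
      exact gfun_mem_SSet (by omega)
    have hMnotmem : M ∉ bra (k - 1) := by
      rw [mem_bra, hMval]; omega
    obtain ⟨cM, hcM, heqM⟩ := (VWs hk hG h hMle hSS1).2 hMmem
    have herase : (SSet k (k + 1 + (n + 1))).erase M = SSet k (k + 1 + n) := by
      rw [show k + 1 + (n + 1) = (k + 1 + n) + 1 from by omega]
      exact SSet_erase (by omega)
    rw [herase] at heqM
    have hzero : V M * W (bra (k - 1)) = 0 := (VWs hk hG h hMle (subgee_bra hk hG le_rfl)).1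
      hMnotmem
    have hcM0 : cM ≠ 0 := by rcases hcM with rfl | rfl <;> norm_num
    refine ⟨c * cM, mul_ne_zero hc hcM0, ?_, ?_⟩
    · -- chain 1
      rw [hsplit, mul_assoc]
      rw [ubar_mul_tm 𝒜 (W (SSet k (k + 1 + (n + 1)))) (WS0_mem hk hG h) hVM]
      rw [hzero, tm_zero_left, zero_sub, heqM, tm_smul_right, smul_smul, ← neg_smul,
        mul_smul_comm, hch1, smul_smul]
      congr 1
      have hex : ((-1 : ℚ)) ^ k = -(-1 : ℚ) ^ (k - 1) := by
        conv_lhs => rw [show k = (k - 1) + 1 from by omega]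
        rw [pow_succ]
        ring
      rw [show k * (n + 1) = k * n + k from by ring, pow_add, hex]
      ring
    · -- chain 2
      rw [hsplit, mul_assoc]
      rw [ubar_mul_tm 𝒜 (W (bra (k - 1))) (h.W_mem _ hSS1) hVM]
      rw [hzero, tm_zero_right, smul_zero, sub_zero, heqM, tm_smul_left, mul_smul_comm, hch2,
        smul_smul]
      congr 1
      ring
  
/-- Phase 0 chains -/
lemma CH0 : ∀ n, n ≤ k - 1 → ∃ c : ℚ, c ≠ 0 ∧
    ((List.range n).map (fun j => ubar 𝒜 (V (gfun j)))).prod *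
      tm 𝒜 (W (bra n)) (W ∅) = c • tm 𝒜 (W ∅) (W ∅) ∧
    ((List.range n).map (fun j => ubar 𝒜 (V (gfun j)))).prod *
      tm 𝒜 (W ∅) (W (bra n)) = (((-1 : ℚ)) ^ n * c) • tm 𝒜 (W ∅) (W ∅) := by
  intro n
  induction n with
  | zero =>
    intro _
    have hbra0 : bra 0 = (∅ : Finset ℕ+) := rfl
    refine ⟨1, one_ne_zero, ?_, ?_⟩ <;>
      simp [hbra0]
  | succ n ih =>
    intro hn
    obtain ⟨c, hc, hch1, hch2⟩ := ih (by omega)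
    set M : ℕ+ := gfun n with hM
    have hMval : (M : ℕ) = n + 1 := rfl
    have hMle : (M : ℕ) ≤ 2 * k := by rw [hMval]; omega
    have hVM : V M ∈ 𝒜 1 := h.V_mem M (by omega)
    have hsplit : ((List.range (n + 1)).map (fun j => ubar 𝒜 (V (gfun j)))).prod
        = ((List.range n).map (fun j => ubar 𝒜 (V (gfun j)))).prod * ubar 𝒜 (V M) := by
      rw [List.range_succ, List.map_append, List.prod_append]
      simp [hM]
    have hbra1 : Subgee 𝒢 (bra (n + 1)) := subgee_bra hk hG (by omega)
    have hMmem : M ∈ bra (n + 1) := gfun_mem_bra n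
    have hMnotmem : M ∉ (∅ : Finset ℕ+) := Finset.notMem_empty M
    obtain ⟨cM, hcM, heqM⟩ := (VWs hk hG h hMle hbra1).2 hMmem
    rw [bra_erase] at heqM
    have hzero : V M * W ∅ = 0 :=
      (VWs hk hG h hMle (subgee_empty h.gee_nonempty)).1 hMnotmem
    have hcM0 : cM ≠ 0 := by rcases hcM with rfl | rfl <;> norm_num
    have hWb1 : W (bra (n + 1)) ∈ 𝒜 (2 * k - 2 - (n + 1)) := by
      have := h.W_mem _ hbra1
      rwa [bra_card] at this
    have hWe : W (∅ : Finset ℕ+) ∈ 𝒜 (2 * k - 2) := by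
      have := h.W_mem ∅ (subgee_empty h.gee_nonempty)
      rwa [Finset.card_empty, Nat.sub_zero] at this
    refine ⟨c * cM, mul_ne_zero hc hcM0, ?_, ?_⟩
    · -- chain 1
      rw [hsplit, mul_assoc]
      rw [ubar_mul_tm 𝒜 (W (∅ : Finset ℕ+)) hWb1 hVM]
      rw [hzero, tm_zero_right, smul_zero, sub_zero, heqM, tm_smul_left, mul_smul_comm, hch1,
        smul_smul]
      congr 1
      ring
    · -- chain 2
      rw [hsplit, mul_assoc]
      rw [ubar_mul_tm 𝒜 (W (bra (n + 1))) hWe hVM]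
      rw [hzero, tm_zero_left, zero_sub, heqM, tm_smul_right, smul_smul, ← neg_smul,
        mul_smul_comm, hch2, smul_smul]
      congr 1
      have hm1 : ((-1 : ℚ)) ^ (2 * k - 2) = 1 := Even.neg_one_pow ⟨k - 1, by omega⟩
      rw [hm1, pow_succ]
      ring

end Lower
end PolyAux
namespace PolyAux
section Lower2

variable {R : Type} [Ring R] [Algebra ℚ R] [FiniteDimensional ℚ R]
variable {𝒜 : ℕ → Submodule ℚ R} [GradedAlgebra 𝒜] {V : ℕ+ → R} {W : Finset ℕ+ → R}
variable {k : ℕ} (hk : 2 ≤ k) {𝒢 : Finset (Finset ℕ+)} (hG : 𝒢 = {SSet k (2 * k)})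
variable (h : IsPolygonAlgebra (2 * k + 1) (2 * k - 2) 𝒢 R 𝒜 V W)

lemma tm_ne_zero {x y : R} (hx : x ≠ 0) (hy : y ≠ 0) : tm 𝒜 x y ≠ 0 := by
  have hx' : ¬ ∀ φ : Module.Dual ℚ R, φ x = 0 := by
    rw [Module.forall_dual_apply_eq_zero_iff ℚ x]
    exact hx
  have hy' : ¬ ∀ φ : Module.Dual ℚ R, φ y = 0 := by
    rw [Module.forall_dual_apply_eq_zero_iff ℚ y]
    exact hy
  push_neg at hx' hy'
  obtain ⟨φ, hφ⟩ := hx'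
  obtain ⟨ψ, hψ⟩ := hy'
  set L : (𝒜 ᵍ⊗[ℚ] 𝒜) →ₗ[ℚ] ℚ :=
    (TensorProduct.lid ℚ ℚ).toLinearMap ∘ₗ (TensorProduct.map φ ψ) ∘ₗ
      (GradedTensorProduct.of ℚ 𝒜 𝒜).symm.toLinearMap with hL
  have hLtm : L (tm 𝒜 x y) = φ x * ψ y := by
    rw [hL]
    simp only [LinearMap.coe_comp, Function.comp_apply, LinearEquiv.coe_toLinearMap, tm,
      GradedTensorProduct.of_symm_of, TensorProduct.map_tmul, TensorProduct.lid_tmul,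
      smul_eq_mul]
  intro h0
  rw [h0, map_zero] at hLtm
  exact (mul_ne_zero hφ hψ) hLtm.symm

include hk hG h

lemma WS1_mem : W (SSet k (2 * k)) ∈ 𝒜 (k - 1) := by
  have := h.W_mem (SSet k (2 * k)) (subgee_SSet hG le_rfl)
  rwa [SSet_card, show 2 * k - 2 - (2 * k - (k + 1)) = k - 1 from by omega] at this

lemma neg_one_pow_sq : ((-1 : ℚ)) ^ ((k - 1) * (k - 1)) = ((-1 : ℚ)) ^ (k - 1) := by
  rcases Nat.even_or_odd (k - 1) with he | ho
  · rw [Even.neg_one_pow (he.mul_right _), Even.neg_one_pow he]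
  · rw [Odd.neg_one_pow (ho.mul ho), Odd.neg_one_pow ho]

lemma WbarWbar :
    ubar 𝒜 (W (bra (k - 1))) * ubar 𝒜 (W (SSet k (2 * k)))
      = -tm 𝒜 (W (bra (k - 1))) (W (SSet k (2 * k)))
        - ((-1 : ℚ)) ^ (k - 1) • tm 𝒜 (W (SSet k (2 * k))) (W (bra (k - 1))) := by
  have hW0 : W (bra (k - 1)) ∈ 𝒜 (k - 1) := WS0_mem hk hG h
  have hW1 : W (SSet k (2 * k)) ∈ 𝒜 (k - 1) := WS1_mem hk hG h
  have h1m : (1 : R) ∈ 𝒜 0 := SetLike.one_mem_graded _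
  have hWW0 : W (bra (k - 1)) * W (SSet k (2 * k)) = 0 :=
    WW_zero h (hsum_spec hk hG) (subgee_bra hk hG le_rfl) (subgee_SSet hG le_rfl)
  have hWW1 : W (bra (k - 1)) * W (SSet k (2 * k)) = 0 := hWW0
  rw [ubar, ubar, sub_mul, mul_sub, mul_sub]
  rw [tm_mul_tm 𝒜 (W (bra (k - 1))) (1 : R) h1m hW1]
  rw [tm_mul_tm 𝒜 (W (bra (k - 1))) (W (SSet k (2 * k))) h1m h1m]
  rw [tm_mul_tm 𝒜 (1 : R) (1 : R) hW0 hW1]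
  rw [tm_mul_tm 𝒜 (1 : R) (W (SSet k (2 * k))) hW0 h1m]
  rw [hWW0, tm_zero_left, tm_zero_right, neg_one_pow_sq hk hG h]
  simp only [Nat.zero_mul, Nat.mul_zero, pow_zero, one_smul, one_mul, mul_one, smul_zero]
  module

/-- the final list of zero divisors -/
noncomputable def LL (𝒜 : ℕ → Submodule ℚ R) [GradedAlgebra 𝒜] (V : ℕ+ → R)
    (W : Finset ℕ+ → R) (k : ℕ) : List (𝒜 ᵍ⊗[ℚ] 𝒜) :=
  (List.range (k - 1)).map (fun j => ubar 𝒜 (V (gfun j))) ++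
  (List.range' (k + 1) (k - 1)).map (fun j => ubar 𝒜 (V (gfun j))) ++
  [ubar 𝒜 (W (bra (k - 1))), ubar 𝒜 (W (SSet k (2 * k)))]

lemma LL_length : (LL 𝒜 V W k).length = 2 * k := by
  rw [LL]
  simp only [List.length_append, List.length_map, List.length_range, List.length_range',
    List.length_cons, List.length_nil]
  omega

lemma LL_zd : ∀ q ∈ LL 𝒜 V W k, muMap 𝒜 q = 0 := by
  intro q hq
  rw [LL, List.mem_append, List.mem_append] at hq
  rcases hq with (hq | hq) | hq
  · obtain ⟨j, _, rfl⟩ := List.mem_map.1 hq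
    exact muMap_ubar 𝒜 _
  · obtain ⟨j, _, rfl⟩ := List.mem_map.1 hq
    exact muMap_ubar 𝒜 _
  · simp only [List.mem_cons, List.mem_singleton, List.not_mem_nil, or_false] at hq
    rcases hq with rfl | rfl
    · exact muMap_ubar 𝒜 _
    · exact muMap_ubar 𝒜 _

lemma LL_prod : ∃ c : ℚ, c ≠ 0 ∧
    (LL 𝒜 V W k).prod = c • tm 𝒜 (W (∅ : Finset ℕ+)) (W (∅ : Finset ℕ+)) := by
  obtain ⟨c₁, hc₁, H1, H2⟩ := CH1 hk hG h (k - 1) le_rfl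
  rw [show k + 1 + (k - 1) = 2 * k from by omega, SSet_base] at H1 H2
  obtain ⟨c₀, hc₀, G1, G2⟩ := CH0 hk hG h (k - 1) le_rfl
  have hsign : ((-1 : ℚ)) ^ (k * (k - 1)) = 1 := by
    refine Even.neg_one_pow ?_
    rcases Nat.even_or_odd k with he | ho
    · exact he.mul_right _
    · exact ((Nat.Odd.sub_odd ho odd_one)).mul_left _
  rw [hsign, one_mul] at H1
  have hsq : ((-1 : ℚ)) ^ (k - 1) * ((-1 : ℚ)) ^ (k - 1) = 1 := by
    rw [← pow_add]
    exact Even.neg_one_pow ⟨k - 1, rfl⟩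
  refine ⟨-(2 : ℚ) * (c₀ * c₁), by norm_num [hc₀, hc₁], ?_⟩
  have hprod : (LL 𝒜 V W k).prod
      = ((List.range (k - 1)).map (fun j => ubar 𝒜 (V (gfun j)))).prod *
        (((List.range' (k + 1) (k - 1)).map (fun j => ubar 𝒜 (V (gfun j)))).prod *
          (ubar 𝒜 (W (bra (k - 1))) * ubar 𝒜 (W (SSet k (2 * k))))) := by
    rw [LL, List.prod_append, List.prod_append, List.prod_cons, List.prod_cons, List.prod_nil,
      mul_one, mul_assoc]
  rw [hprod, WbarWbar hk hG h]
  have hstep1 : ((List.range' (k + 1) (k - 1)).map (fun j => ubar 𝒜 (V (gfun j)))).prod *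
      (-tm 𝒜 (W (bra (k - 1))) (W (SSet k (2 * k)))
        - ((-1 : ℚ)) ^ (k - 1) • tm 𝒜 (W (SSet k (2 * k))) (W (bra (k - 1))))
      = (-c₁) • tm 𝒜 (W (bra (k - 1))) (W ∅)
        - (((-1 : ℚ)) ^ (k - 1) * c₁) • tm 𝒜 (W ∅) (W (bra (k - 1))) := by
    rw [mul_sub, mul_neg, mul_smul_comm, H1, H2]
    module
  rw [hstep1, mul_sub, mul_smul_comm, mul_smul_comm, G1, G2, smul_smul, smul_smul]
  have hco : ((-1 : ℚ)) ^ (k - 1) * c₁ * (((-1 : ℚ)) ^ (k - 1) * c₀) = c₁ * c₀ := by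
    rw [mul_mul_mul_comm, hsq, one_mul]
  rw [hco, ← sub_smul]
  congr 1
  ring

end Lower2
end PolyAux

/-- For the equilateral `(2k+1)`-gon, with single gee `{k+2, …, 2k}`, `n = 2k+1` and
`m = 2k−2`, every algebra of type `(𝒢, m, n)` has zero-divisor-cup-length exactly `2k`. -/
theorem stmt_16 (k : ℕ) (hk : 2 ≤ k)
    (R : Type) [Ring R] [Algebra ℚ R] [FiniteDimensional ℚ R]
    (𝒜 : ℕ → Submodule ℚ R) [GradedAlgebra 𝒜] (V : ℕ+ → R) (W : Finset ℕ+ → R)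
    (h : IsPolygonAlgebra (2 * k + 1) (2 * k - 2)
      {Finset.Icc (⟨k + 2, by omega⟩ : ℕ+) ⟨2 * k, by omega⟩} R 𝒜 V W) :
    IsGreatest (zclSet 𝒜) (2 * k) := by
  classical
  have hIcc : Finset.Icc (⟨k + 2, by omega⟩ : ℕ+) ⟨2 * k, by omega⟩ = PolyAux.SSet k (2 * k) := by
    ext x
    rw [Finset.mem_Icc]
    refine Iff.trans ?_ (PolyAux.mem_image_Ico (x := x) (a := k + 1) (b := 2 * k)).symm
    have e1 : ((⟨k + 2, by omega⟩ : ℕ+) ≤ x) ↔ k + 2 ≤ (x : ℕ) := (PNat.coe_le_coe _ _).symm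
    have e2 : (x ≤ (⟨2 * k, by omega⟩ : ℕ+)) ↔ (x : ℕ) ≤ 2 * k := (PNat.coe_le_coe _ _).symm
    rw [e1, e2]
    show k + 2 ≤ (x : ℕ) ∧ (x : ℕ) ≤ 2 * k ↔ k + 1 + 1 ≤ (x : ℕ) ∧ (x : ℕ) ≤ 2 * k
    omega
  have hG : ({Finset.Icc (⟨k + 2, by omega⟩ : ℕ+) ⟨2 * k, by omega⟩} : Finset (Finset ℕ+))
      = {PolyAux.SSet k (2 * k)} := by rw [hIcc]; rfl
  constructor
  · refine ⟨PolyAux.LL 𝒜 V W k, PolyAux.LL_length hk hG h, PolyAux.LL_zd hk hG h, ?_⟩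
    obtain ⟨c, hc, hp⟩ := PolyAux.LL_prod hk hG h
    rw [hp]
    have hW : W (∅ : Finset ℕ+) ≠ 0 :=
      PolyAux.W_ne_zero h (PolyAux.subgee_empty h.gee_nonempty)
    exact smul_ne_zero hc (PolyAux.tm_ne_zero hW hW)
  · intro b hb
    exact PolyAux.zcl_upper h (PolyAux.hsum_spec hk hG) (PolyAux.hkappa_spec hk hG) hb
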